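/- In the weak commutativity group χ(G), for all g, h, a, b ∈ G, writing [g,φ] := g⁻¹·g^φ, the element [[g,φ]·[h,φ], a, b^φ] · ([[g,φ],a,b^φ]·[[h,φ],a,b^φ])⁻¹ belongs to the subgroup L₁₂; that is, [[g,φ]·[h,φ], a, b^φ] ≡ [[g,φ],a,b^φ]·[[h,φ],a,b^φ] modulo L₁₂. -/

import Mathlib

open Subgroup
open scoped commutatorElement

/-- The weak commutativity relations inside the free product `G ∗ G`. -/
def chiRel (G : Type*) [Group G] : Subgroup (Monoid.Coprod G G) :=
  Subgroup.normalClosure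
    {x | ∃ g : G, x = Monoid.Coprod.inl g * Monoid.Coprod.inr g *
      (Monoid.Coprod.inl g)⁻¹ * (Monoid.Coprod.inr g)⁻¹}

instance chiRel_normal (G : Type*) [Group G] : (chiRel G).Normal :=
  Subgroup.normalClosure_normal

/-- The weak commutativity group `χ(G)`. -/
def Chi (G : Type*) [Group G] : Type _ := Monoid.Coprod G G ⧸ chiRel G

instance (G : Type*) [Group G] : Group (Chi G) :=
  inferInstanceAs (Group (Monoid.Coprod G G ⧸ chiRel G))

/-- The canonical map `G → χ(G)`, `g ↦ g`. -/
def chiIota1 (G : Type*) [Group G] : G →* Chi G :=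
  (QuotientGroup.mk' (chiRel G)).comp Monoid.Coprod.inl

/-- The canonical map `G → χ(G)`, `g ↦ g^φ`. -/
def chiIota2 (G : Type*) [Group G] : G →* Chi G :=
  (QuotientGroup.mk' (chiRel G)).comp Monoid.Coprod.inr

/-- `G₁ ≤ χ(G)`. -/
def chiG1 (G : Type*) [Group G] : Subgroup (Chi G) := (chiIota1 G).range

/-- `G₂ = G^φ ≤ χ(G)`. -/
def chiG2 (G : Type*) [Group G] : Subgroup (Chi G) := (chiIota2 G).range

/-- `L = ⟨g⁻¹ g^φ : g ∈ G⟩`. -/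
def chiL (G : Type*) [Group G] : Subgroup (Chi G) :=
  Subgroup.closure {x | ∃ g : G, x = (chiIota1 G g)⁻¹ * chiIota2 G g}

/-- `D = ⁅G₁, G₂⁆`. -/
def chiD (G : Type*) [Group G] : Subgroup (Chi G) := ⁅chiG1 G, chiG2 G⁆

/-- `L₁ = ⁅L, G₁⁆`. -/
def chiL1 (G : Type*) [Group G] : Subgroup (Chi G) := ⁅chiL G, chiG1 G⁆

/-- `L₂ = ⁅L, G₂⁆`. -/
def chiL2 (G : Type*) [Group G] : Subgroup (Chi G) := ⁅chiL G, chiG2 G⁆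

/-- `R = ⁅⁅G₁, L⁆, G₂⁆`. -/
def chiR (G : Type*) [Group G] : Subgroup (Chi G) := ⁅⁅chiG1 G, chiL G⁆, chiG2 G⁆

/-- `L₁₂ = ⁅L₁, L₂⁆`. -/
def chiL12 (G : Type*) [Group G] : Subgroup (Chi G) := ⁅chiL1 G, chiL2 G⁆

/-! ### Auxiliary universal group identities -/

section UGroup

variable {H : Type*} [Group H]

lemma conj_comm_of_conj_eq {p q d : H} (h : p * d * p⁻¹ = q * d * q⁻¹) :
    Commute (p⁻¹ * q) d := by
  have : (p⁻¹ * q) * d = d * (p⁻¹ * q) :=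
    calc (p⁻¹ * q) * d = p⁻¹ * (q * d * q⁻¹) * q := by group
      _ = p⁻¹ * (p * d * p⁻¹) * q := by rw [h]
      _ = d * (p⁻¹ * q) := by group
  exact this

lemma conj_eq_of_commute {u d : H} (h : Commute u d) : u * d * u⁻¹ = d := by
  rw [h.eq]; group

lemma inv_conj_eq_of_commute {u d : H} (h : Commute u d) : u⁻¹ * d * u = d := by
  rw [h.inv_left.eq]; group

lemma expand_key {p q s t : H} (h1 : p * s = s * p) (h2 : q * t = t * q)
    (h0 : ⁅p * q, s * t⁆ = 1) :
    ⁅q, s⁆ = (p⁻¹ * s) * ⁅t, p⁆ * (p⁻¹ * s)⁻¹ := by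
  have h2' : t * q⁻¹ = q⁻¹ * t := ((show Commute q t from h2).symm.inv_right).eq
  have key : ⁅p * q, s * t⁆ = (p * ⁅q, s⁆ * p⁻¹) * (s * ⁅p, t⁆ * s⁻¹) := by
    calc ⁅p * q, s * t⁆ = (p * q * s) * (t * q⁻¹) * (p⁻¹ * t⁻¹ * s⁻¹) := by
          simp only [commutatorElement_def]; group
      _ = (p * q * s) * (q⁻¹ * t) * (p⁻¹ * t⁻¹ * s⁻¹) := by rw [h2']
      _ = (p * ⁅q, s⁆ * p⁻¹) * ((p * s) * (t * p⁻¹ * t⁻¹ * s⁻¹)) := by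
          simp only [commutatorElement_def]; group
      _ = (p * ⁅q, s⁆ * p⁻¹) * ((s * p) * (t * p⁻¹ * t⁻¹ * s⁻¹)) := by rw [h1]
      _ = (p * ⁅q, s⁆ * p⁻¹) * (s * ⁅p, t⁆ * s⁻¹) := by
          simp only [commutatorElement_def]; group
  rw [key] at h0
  have h3 : p * ⁅q, s⁆ * p⁻¹ = (s * ⁅p, t⁆ * s⁻¹)⁻¹ := eq_inv_of_mul_eq_one_left h0
  calc ⁅q, s⁆ = p⁻¹ * (p * ⁅q, s⁆ * p⁻¹) * p := by group
    _ = p⁻¹ * (s * ⁅p, t⁆ * s⁻¹)⁻¹ * p := by rw [h3]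
    _ = (p⁻¹ * s) * ⁅t, p⁆ * (p⁻¹ * s)⁻¹ := by
        simp only [commutatorElement_def]; group

lemma conjA {p q r : H} : p * ⁅q, r⁆ * p⁻¹ = ⁅p * q, r⁆ * ⁅p, r⁆⁻¹ := by
  simp only [commutatorElement_def]; group

lemma final_identity (u v x y : H) :
    ⁅⁅u * v, x⁆, y⁆ * (⁅⁅u, x⁆, y⁆ * ⁅⁅v, x⁆, y⁆)⁻¹ =
      ⁅u * ⁅v, x⁆ * u⁻¹, ⁅⁅u, x⁆, y⁆⁆ *
      (⁅⁅u, x⁆, y⁆ * ⁅u, ⁅⁅v, x⁆, y⁆⁆ * ⁅⁅u, x⁆, y⁆⁻¹) *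
      ((⁅⁅u, x⁆, y⁆ * ⁅⁅v, x⁆, y⁆) *
        ((u * y) * ⁅⁅v, x⁆, ⁅y⁻¹, u⁻¹⁆⁆ * (u * y)⁻¹) *
        (⁅⁅u, x⁆, y⁆ * ⁅⁅v, x⁆, y⁆)⁻¹) := by
  simp only [commutatorElement_def]; group

end UGroup
section ChiBasic

variable (G : Type*) [Group G]

/-- abbreviation for the generators of `L`. -/
def chiEl (g : G) : Chi G := (chiIota1 G g)⁻¹ * chiIota2 G g

lemma chiEl_mem_L (g : G) : chiEl G g ∈ chiL G :=
  Subgroup.subset_closure ⟨g, rfl⟩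

lemma chi_comm (g : G) : Commute (chiIota1 G g) (chiIota2 G g) := by
  apply commutatorElement_eq_one_iff_commute.mp
  have h1 : (QuotientGroup.mk' (chiRel G)) (Monoid.Coprod.inl g * Monoid.Coprod.inr g *
      (Monoid.Coprod.inl g)⁻¹ * (Monoid.Coprod.inr g)⁻¹) = 1 :=
    (QuotientGroup.eq_one_iff _).mpr (Subgroup.subset_normalClosure ⟨g, rfl⟩)
  have h0 : ⁅chiIota1 G g, chiIota2 G g⁆
      = (QuotientGroup.mk' (chiRel G)) (Monoid.Coprod.inl g * Monoid.Coprod.inr g *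
        (Monoid.Coprod.inl g)⁻¹ * (Monoid.Coprod.inr g)⁻¹) := by
        simp only [chiIota1, chiIota2, commutatorElement_def, map_mul, map_inv]
        rfl
  exact h0.trans h1

lemma chi_top : chiG1 G ⊔ chiG2 G = ⊤ := by
  have h1 : chiG1 G = Subgroup.map (QuotientGroup.mk' (chiRel G))
      (Monoid.Coprod.inl : G →* Monoid.Coprod G G).range := MonoidHom.range_comp _ _
  have h2 : chiG2 G = Subgroup.map (QuotientGroup.mk' (chiRel G))
      (Monoid.Coprod.inr : G →* Monoid.Coprod G G).range := MonoidHom.range_comp _ _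
  have h3 : Subgroup.map (QuotientGroup.mk' (chiRel G))
      (Monoid.Coprod.inl : G →* Monoid.Coprod G G).range ⊔ Subgroup.map
      (QuotientGroup.mk' (chiRel G)) (Monoid.Coprod.inr : G →* Monoid.Coprod G G).range = ⊤ := by
    rw [← Subgroup.map_sup, Monoid.Coprod.range_inl_sup_range_inr,
      ← MonoidHom.range_eq_map]
    exact MonoidHom.range_eq_top_of_surjective _ (QuotientGroup.mk'_surjective _)
  rw [h1, h2]
  exact h3

lemma chi_star (x y : G) :
    ⁅chiIota1 G y, chiIota2 G x⁆ =
      chiEl G x * ⁅chiIota2 G y, chiIota1 G x⁆ * (chiEl G x)⁻¹ := by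
  show _ = ((chiIota1 G x)⁻¹ * chiIota2 G x) * _ * ((chiIota1 G x)⁻¹ * chiIota2 G x)⁻¹
  apply expand_key (chi_comm G x).eq (chi_comm G y).eq
  have h := commutatorElement_eq_one_iff_commute.mpr (chi_comm G (x * y))
  simpa only [map_mul] using h

lemma chi_conjA (a b k : G) :
    chiIota1 G k * ⁅chiIota1 G a, chiIota2 G b⁆ * (chiIota1 G k)⁻¹ =
      ⁅chiIota1 G (k * a), chiIota2 G b⁆ * ⁅chiIota1 G k, chiIota2 G b⁆⁻¹ := by
  rw [map_mul]; exact conjA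

lemma chi_conjA2 (a b k : G) :
    ⁅chiIota2 G (k * a), chiIota1 G b⁆ * ⁅chiIota2 G k, chiIota1 G b⁆⁻¹ =
      chiIota2 G k * ⁅chiIota2 G a, chiIota1 G b⁆ * (chiIota2 G k)⁻¹ := by
  rw [map_mul]; exact conjA.symm

lemma chi_dagger (a b k : G) :
    chiIota1 G k * ⁅chiIota1 G a, chiIota2 G b⁆ * (chiIota1 G k)⁻¹ =
      chiEl G b * (chiIota2 G k *
        ((chiEl G b)⁻¹ * ⁅chiIota1 G a, chiIota2 G b⁆ * chiEl G b) * (chiIota2 G k)⁻¹) *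
        (chiEl G b)⁻¹ := by
  calc chiIota1 G k * ⁅chiIota1 G a, chiIota2 G b⁆ * (chiIota1 G k)⁻¹
      = ⁅chiIota1 G (k * a), chiIota2 G b⁆ * ⁅chiIota1 G k, chiIota2 G b⁆⁻¹ :=
        chi_conjA G a b k
    _ = (chiEl G b * ⁅chiIota2 G (k * a), chiIota1 G b⁆ * (chiEl G b)⁻¹) *
        (chiEl G b * ⁅chiIota2 G k, chiIota1 G b⁆ * (chiEl G b)⁻¹)⁻¹ := by
        rw [chi_star G b (k * a), chi_star G b k]
    _ = chiEl G b * (⁅chiIota2 G (k * a), chiIota1 G b⁆ *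
        ⁅chiIota2 G k, chiIota1 G b⁆⁻¹) * (chiEl G b)⁻¹ := by group
    _ = chiEl G b * (chiIota2 G k * ⁅chiIota2 G a, chiIota1 G b⁆ * (chiIota2 G k)⁻¹) *
        (chiEl G b)⁻¹ := by rw [chi_conjA2 G a b k]
    _ = chiEl G b * (chiIota2 G k * ((chiEl G b)⁻¹ *
          (chiEl G b * ⁅chiIota2 G a, chiIota1 G b⁆ * (chiEl G b)⁻¹) * chiEl G b) *
          (chiIota2 G k)⁻¹) * (chiEl G b)⁻¹ := by group
    _ = chiEl G b * (chiIota2 G k *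
        ((chiEl G b)⁻¹ * ⁅chiIota1 G a, chiIota2 G b⁆ * chiEl G b) * (chiIota2 G k)⁻¹) *
        (chiEl G b)⁻¹ := by rw [← chi_star G b a]

lemma chi_el_conj_i2 (b : G) :
    chiEl G b * chiIota2 G b * (chiEl G b)⁻¹ = chiIota2 G b := by
  show ((chiIota1 G b)⁻¹ * chiIota2 G b) * chiIota2 G b *
      ((chiIota1 G b)⁻¹ * chiIota2 G b)⁻¹ = chiIota2 G b
  calc ((chiIota1 G b)⁻¹ * chiIota2 G b) * chiIota2 G b *
      ((chiIota1 G b)⁻¹ * chiIota2 G b)⁻¹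
      = (chiIota1 G b)⁻¹ * (chiIota2 G b * chiIota1 G b) := by group
    _ = (chiIota1 G b)⁻¹ * (chiIota1 G b * chiIota2 G b) := by rw [← (chi_comm G b).eq]
    _ = chiIota2 G b := by group

lemma chi_H1 (a b : G) : Commute (chiEl G b) ⁅chiIota1 G a, chiIota2 G b⁆ := by
  have key2 : ∀ d : Chi G, chiEl G b * (chiIota2 G b * ((chiEl G b)⁻¹ * d * chiEl G b) *
      (chiIota2 G b)⁻¹) * (chiEl G b)⁻¹ = chiIota2 G b * d * (chiIota2 G b)⁻¹ := by
    intro d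
    calc chiEl G b * (chiIota2 G b * ((chiEl G b)⁻¹ * d * chiEl G b) *
        (chiIota2 G b)⁻¹) * (chiEl G b)⁻¹
        = (chiEl G b * chiIota2 G b * (chiEl G b)⁻¹) * d *
          (chiEl G b * chiIota2 G b * (chiEl G b)⁻¹)⁻¹ := by group
      _ = chiIota2 G b * d * (chiIota2 G b)⁻¹ := by rw [chi_el_conj_i2]
  have h5 : chiIota1 G b * ⁅chiIota1 G a, chiIota2 G b⁆ * (chiIota1 G b)⁻¹ =
      chiIota2 G b * ⁅chiIota1 G a, chiIota2 G b⁆ * (chiIota2 G b)⁻¹ :=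
    (chi_dagger G a b b).trans (key2 _)
  show Commute ((chiIota1 G b)⁻¹ * chiIota2 G b) _
  exact conj_comm_of_conj_eq h5

lemma chi_H2 (a b k : G) :
    Commute (chiIota1 G k * ⁅chiIota1 G a, chiIota2 G b⁆ * (chiIota1 G k)⁻¹)
      (chiEl G b) := by
  rw [chi_conjA G a b k]
  exact Commute.mul_left ((chi_H1 G (k * a) b).symm) (((chi_H1 G k b).symm).inv_left)

lemma chi_DL (a b k : G) : Commute (chiEl G k) ⁅chiIota1 G a, chiIota2 G b⁆ := by
  have h4 := chi_dagger G a b k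
  rw [inv_conj_eq_of_commute (chi_H1 G a b)] at h4
  have h7 : (chiEl G b)⁻¹ * (chiIota1 G k * ⁅chiIota1 G a, chiIota2 G b⁆ *
      (chiIota1 G k)⁻¹) * chiEl G b =
      chiIota2 G k * ⁅chiIota1 G a, chiIota2 G b⁆ * (chiIota2 G k)⁻¹ := by
    rw [h4]; group
  have h8 : (chiEl G b)⁻¹ * (chiIota1 G k * ⁅chiIota1 G a, chiIota2 G b⁆ *
      (chiIota1 G k)⁻¹) * chiEl G b =
      chiIota1 G k * ⁅chiIota1 G a, chiIota2 G b⁆ * (chiIota1 G k)⁻¹ :=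
    inv_conj_eq_of_commute ((chi_H2 G a b k).symm)
  have h9 := h8.symm.trans h7
  show Commute ((chiIota1 G k)⁻¹ * chiIota2 G k) _
  exact conj_comm_of_conj_eq h9

end ChiBasic
section ChiNormal

variable (G : Type*) [Group G]

lemma chi_commute_D_L : ∀ x ∈ chiD G, ∀ n ∈ chiL G, Commute x n := by
  have hgen : ∀ a b : G, ∀ n ∈ chiL G, Commute ⁅chiIota1 G a, chiIota2 G b⁆ n := by
    intro a b n hn
    have hn' : n ∈ Subgroup.closure
        {x : Chi G | ∃ g : G, x = (chiIota1 G g)⁻¹ * chiIota2 G g} := hn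
    clear hn
    induction hn' using Subgroup.closure_induction with
    | mem x hx =>
      obtain ⟨k, rfl⟩ := hx
      exact (chi_DL G a b k).symm
    | one => exact Commute.one_right _
    | mul x y hx hy ihx ihy => exact ihx.mul_right ihy
    | inv x hx ih => exact ih.inv_right
  have hD : chiD G ≤ Subgroup.centralizer (chiL G : Set (Chi G)) := by
    show ⁅chiG1 G, chiG2 G⁆ ≤ _
    apply Subgroup.commutator_le.mpr
    rintro p ⟨a, rfl⟩ q ⟨b, rfl⟩
    rw [Subgroup.mem_centralizer_iff]
    intro m hm
    exact ((hgen a b m hm).eq).symm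
  intro x hx n hn
  have h := Subgroup.mem_centralizer_iff.mp (hD hx) n hn
  exact h.symm

/-- Produce normality from closure under conjugation by the two canonical copies of `G`. -/
lemma chi_normal_of_conj (K : Subgroup (Chi G))
    (hi : ∀ g : G, ∀ n ∈ K, chiIota1 G g * n * (chiIota1 G g)⁻¹ ∈ K)
    (hj : ∀ g : G, ∀ n ∈ K, chiIota2 G g * n * (chiIota2 G g)⁻¹ ∈ K) : K.Normal := by
  rw [← Subgroup.normalizer_eq_top_iff, eq_top_iff, ← chi_top G]
  apply sup_le
  · rintro p ⟨g, rfl⟩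
    rw [Subgroup.mem_normalizer_iff]
    intro n
    refine ⟨fun hn => hi g n hn, fun hn => ?_⟩
    have h2 := hi (g⁻¹) _ hn
    have heq : chiIota1 G (g⁻¹) * (chiIota1 G g * n * (chiIota1 G g)⁻¹) *
        (chiIota1 G (g⁻¹))⁻¹ = n := by
      simp only [map_inv]; group
    rwa [heq] at h2
  · rintro p ⟨g, rfl⟩
    rw [Subgroup.mem_normalizer_iff]
    intro n
    refine ⟨fun hn => hj g n hn, fun hn => ?_⟩
    have h2 := hj (g⁻¹) _ hn
    have heq : chiIota2 G (g⁻¹) * (chiIota2 G g * n * (chiIota2 G g)⁻¹) *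
        (chiIota2 G (g⁻¹))⁻¹ = n := by
      simp only [map_inv]; group
    rwa [heq] at h2

lemma chi_conjL_i (g : G) : ∀ n ∈ chiL G,
    chiIota1 G g * n * (chiIota1 G g)⁻¹ ∈ chiL G := by
  intro n hn
  have hn' : n ∈ Subgroup.closure
      {x : Chi G | ∃ k : G, x = (chiIota1 G k)⁻¹ * chiIota2 G k} := hn
  clear hn
  induction hn' using Subgroup.closure_induction with
  | mem x hx =>
    obtain ⟨k, rfl⟩ := hx
    have key : chiIota1 G g * ((chiIota1 G k)⁻¹ * chiIota2 G k) * (chiIota1 G g)⁻¹ =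
        ((chiIota1 G (k * g⁻¹))⁻¹ * chiIota2 G (k * g⁻¹)) *
          ((chiIota1 G (g⁻¹))⁻¹ * chiIota2 G (g⁻¹))⁻¹ := by
      simp only [map_mul, map_inv]; group
    rw [key]
    exact mul_mem (Subgroup.subset_closure ⟨k * g⁻¹, rfl⟩)
      (inv_mem (Subgroup.subset_closure ⟨g⁻¹, rfl⟩))
  | one =>
    have : chiIota1 G g * 1 * (chiIota1 G g)⁻¹ = 1 := by group
    rw [this]; exact one_mem _
  | mul x y hx hy ihx ihy =>
    have : chiIota1 G g * (x * y) * (chiIota1 G g)⁻¹ =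
        (chiIota1 G g * x * (chiIota1 G g)⁻¹) * (chiIota1 G g * y * (chiIota1 G g)⁻¹) := by
      group
    rw [this]; exact mul_mem ihx ihy
  | inv x hx ih =>
    have : chiIota1 G g * x⁻¹ * (chiIota1 G g)⁻¹ =
        (chiIota1 G g * x * (chiIota1 G g)⁻¹)⁻¹ := by group
    rw [this]; exact inv_mem ih

lemma chi_conjL_j (g : G) : ∀ n ∈ chiL G,
    chiIota2 G g * n * (chiIota2 G g)⁻¹ ∈ chiL G := by
  intro n hn
  have hn' : n ∈ Subgroup.closure
      {x : Chi G | ∃ k : G, x = (chiIota1 G k)⁻¹ * chiIota2 G k} := hn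
  clear hn
  induction hn' using Subgroup.closure_induction with
  | mem x hx =>
    obtain ⟨k, rfl⟩ := hx
    have key : chiIota2 G g * ((chiIota1 G k)⁻¹ * chiIota2 G k) * (chiIota2 G g)⁻¹ =
        ((chiIota1 G (g⁻¹))⁻¹ * chiIota2 G (g⁻¹))⁻¹ *
          ((chiIota1 G (k * g⁻¹))⁻¹ * chiIota2 G (k * g⁻¹)) := by
      simp only [map_mul, map_inv]; group
    rw [key]
    exact mul_mem (inv_mem (Subgroup.subset_closure ⟨g⁻¹, rfl⟩))
      (Subgroup.subset_closure ⟨k * g⁻¹, rfl⟩)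
  | one =>
    have : chiIota2 G g * 1 * (chiIota2 G g)⁻¹ = 1 := by group
    rw [this]; exact one_mem _
  | mul x y hx hy ihx ihy =>
    have : chiIota2 G g * (x * y) * (chiIota2 G g)⁻¹ =
        (chiIota2 G g * x * (chiIota2 G g)⁻¹) * (chiIota2 G g * y * (chiIota2 G g)⁻¹) := by
      group
    rw [this]; exact mul_mem ihx ihy
  | inv x hx ih =>
    have : chiIota2 G g * x⁻¹ * (chiIota2 G g)⁻¹ =
        (chiIota2 G g * x * (chiIota2 G g)⁻¹)⁻¹ := by group
    rw [this]; exact inv_mem ih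

lemma chiL_normal : (chiL G).Normal :=
  chi_normal_of_conj G _ (chi_conjL_i G) (chi_conjL_j G)

lemma chiL1_le_L : chiL1 G ≤ chiL G := by
  haveI := chiL_normal G
  show ⁅chiL G, chiG1 G⁆ ≤ chiL G
  exact Subgroup.commutator_le_left _ _

lemma chiL2_le_L : chiL2 G ≤ chiL G := by
  haveI := chiL_normal G
  show ⁅chiL G, chiG2 G⁆ ≤ chiL G
  exact Subgroup.commutator_le_left _ _

end ChiNormal
section ChiNormal2

variable (G : Type*) [Group G]

lemma chi_conjB (a b k : G) :
    chiIota2 G k * ⁅chiIota1 G a, chiIota2 G b⁆ * (chiIota2 G k)⁻¹ =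
      ⁅chiIota1 G a, chiIota2 G k⁆⁻¹ * ⁅chiIota1 G a, chiIota2 G (k * b)⁆ := by
  rw [map_mul]; simp only [commutatorElement_def]; group

lemma chiD_normal : (chiD G).Normal := by
  apply chi_normal_of_conj
  · intro g n hn
    have hn' : n ∈ ⁅chiG1 G, chiG2 G⁆ := hn
    rw [Subgroup.commutator_def] at hn'
    clear hn
    induction hn' using Subgroup.closure_induction with
    | mem x hx =>
      obtain ⟨p, hp, q, hq, rfl⟩ := hx
      obtain ⟨a, rfl⟩ := hp
      obtain ⟨b, rfl⟩ := hq
      rw [chi_conjA G a b g]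
      exact mul_mem (Subgroup.commutator_mem_commutator ⟨g * a, rfl⟩ ⟨b, rfl⟩)
        (inv_mem (Subgroup.commutator_mem_commutator ⟨g, rfl⟩ ⟨b, rfl⟩))
    | one =>
      have : chiIota1 G g * 1 * (chiIota1 G g)⁻¹ = 1 := by group
      rw [this]; exact one_mem _
    | mul x y hx hy ihx ihy =>
      have : chiIota1 G g * (x * y) * (chiIota1 G g)⁻¹ =
          (chiIota1 G g * x * (chiIota1 G g)⁻¹) * (chiIota1 G g * y * (chiIota1 G g)⁻¹) := by
        group
      rw [this]; exact mul_mem ihx ihy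
    | inv x hx ih =>
      have : chiIota1 G g * x⁻¹ * (chiIota1 G g)⁻¹ =
          (chiIota1 G g * x * (chiIota1 G g)⁻¹)⁻¹ := by group
      rw [this]; exact inv_mem ih
  · intro g n hn
    have hn' : n ∈ ⁅chiG1 G, chiG2 G⁆ := hn
    rw [Subgroup.commutator_def] at hn'
    clear hn
    induction hn' using Subgroup.closure_induction with
    | mem x hx =>
      obtain ⟨p, hp, q, hq, rfl⟩ := hx
      obtain ⟨a, rfl⟩ := hp
      obtain ⟨b, rfl⟩ := hq
      rw [chi_conjB G a b g]
      exact mul_mem (inv_mem (Subgroup.commutator_mem_commutator ⟨a, rfl⟩ ⟨g, rfl⟩))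
        (Subgroup.commutator_mem_commutator ⟨a, rfl⟩ ⟨g * b, rfl⟩)
    | one =>
      have : chiIota2 G g * 1 * (chiIota2 G g)⁻¹ = 1 := by group
      rw [this]; exact one_mem _
    | mul x y hx hy ihx ihy =>
      have : chiIota2 G g * (x * y) * (chiIota2 G g)⁻¹ =
          (chiIota2 G g * x * (chiIota2 G g)⁻¹) * (chiIota2 G g * y * (chiIota2 G g)⁻¹) := by
        group
      rw [this]; exact mul_mem ihx ihy
    | inv x hx ih =>
      have : chiIota2 G g * x⁻¹ * (chiIota2 G g)⁻¹ =
          (chiIota2 G g * x * (chiIota2 G g)⁻¹)⁻¹ := by group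
      rw [this]; exact inv_mem ih

lemma chiL1_normal : (chiL1 G).Normal := by
  apply chi_normal_of_conj
  · intro g n hn
    have hn' : n ∈ ⁅chiL G, chiG1 G⁆ := hn
    rw [Subgroup.commutator_def] at hn'
    clear hn
    induction hn' using Subgroup.closure_induction with
    | mem x hx =>
      obtain ⟨p, hp, q, hq, rfl⟩ := hx
      obtain ⟨c, rfl⟩ := hq
      have key : chiIota1 G g * ⁅p, chiIota1 G c⁆ * (chiIota1 G g)⁻¹ =
          ⁅chiIota1 G g * p * (chiIota1 G g)⁻¹, chiIota1 G (g * c * g⁻¹)⁆ := by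
        simp only [map_mul, map_inv, commutatorElement_def]; group
      rw [key]
      exact Subgroup.commutator_mem_commutator (chi_conjL_i G g p hp) ⟨g * c * g⁻¹, rfl⟩
    | one =>
      have : chiIota1 G g * 1 * (chiIota1 G g)⁻¹ = 1 := by group
      rw [this]; exact one_mem _
    | mul x y hx hy ihx ihy =>
      have : chiIota1 G g * (x * y) * (chiIota1 G g)⁻¹ =
          (chiIota1 G g * x * (chiIota1 G g)⁻¹) * (chiIota1 G g * y * (chiIota1 G g)⁻¹) := by
        group
      rw [this]; exact mul_mem ihx ihy
    | inv x hx ih =>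
      have : chiIota1 G g * x⁻¹ * (chiIota1 G g)⁻¹ =
          (chiIota1 G g * x * (chiIota1 G g)⁻¹)⁻¹ := by group
      rw [this]; exact inv_mem ih
  · intro g n hn
    have hn' : n ∈ ⁅chiL G, chiG1 G⁆ := hn
    rw [Subgroup.commutator_def] at hn'
    clear hn
    induction hn' using Subgroup.closure_induction with
    | mem x hx =>
      obtain ⟨p, hp, q, hq, rfl⟩ := hx
      obtain ⟨c, rfl⟩ := hq
      have hnL : chiIota2 G g * p * (chiIota2 G g)⁻¹ ∈ chiL G := chi_conjL_j G g p hp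
      have hd : ⁅(chiIota1 G c)⁻¹, chiIota2 G g⁆ ∈ chiD G := by
        show _ ∈ ⁅chiG1 G, chiG2 G⁆
        exact Subgroup.commutator_mem_commutator (inv_mem ⟨c, rfl⟩) ⟨g, rfl⟩
      have hone : ⁅chiIota2 G g * p * (chiIota2 G g)⁻¹,
          ⁅(chiIota1 G c)⁻¹, chiIota2 G g⁆⁆ = 1 :=
        commutatorElement_eq_one_iff_commute.mpr
          ((chi_commute_D_L G _ hd _ hnL).symm)
      have key : chiIota2 G g * ⁅p, chiIota1 G c⁆ * (chiIota2 G g)⁻¹ =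
          ⁅chiIota2 G g * p * (chiIota2 G g)⁻¹, chiIota1 G c⁆ *
            (chiIota1 G c * ⁅chiIota2 G g * p * (chiIota2 G g)⁻¹,
              ⁅(chiIota1 G c)⁻¹, chiIota2 G g⁆⁆ * (chiIota1 G c)⁻¹) := by
        simp only [commutatorElement_def]; group
      rw [key, hone]
      have htriv : ⁅chiIota2 G g * p * (chiIota2 G g)⁻¹, chiIota1 G c⁆ *
          (chiIota1 G c * 1 * (chiIota1 G c)⁻¹) =
          ⁅chiIota2 G g * p * (chiIota2 G g)⁻¹, chiIota1 G c⁆ := by group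
      rw [htriv]
      exact Subgroup.commutator_mem_commutator hnL ⟨c, rfl⟩
    | one =>
      have : chiIota2 G g * 1 * (chiIota2 G g)⁻¹ = 1 := by group
      rw [this]; exact one_mem _
    | mul x y hx hy ihx ihy =>
      have : chiIota2 G g * (x * y) * (chiIota2 G g)⁻¹ =
          (chiIota2 G g * x * (chiIota2 G g)⁻¹) * (chiIota2 G g * y * (chiIota2 G g)⁻¹) := by
        group
      rw [this]; exact mul_mem ihx ihy
    | inv x hx ih =>
      have : chiIota2 G g * x⁻¹ * (chiIota2 G g)⁻¹ =
          (chiIota2 G g * x * (chiIota2 G g)⁻¹)⁻¹ := by group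
      rw [this]; exact inv_mem ih

lemma chiL2_normal : (chiL2 G).Normal := by
  apply chi_normal_of_conj
  · intro g n hn
    have hn' : n ∈ ⁅chiL G, chiG2 G⁆ := hn
    rw [Subgroup.commutator_def] at hn'
    clear hn
    induction hn' using Subgroup.closure_induction with
    | mem x hx =>
      obtain ⟨p, hp, q, hq, rfl⟩ := hx
      obtain ⟨c, rfl⟩ := hq
      have hnL : chiIota1 G g * p * (chiIota1 G g)⁻¹ ∈ chiL G := chi_conjL_i G g p hp
      have hd : ⁅(chiIota2 G c)⁻¹, chiIota1 G g⁆ ∈ chiD G := by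
        show _ ∈ ⁅chiG1 G, chiG2 G⁆
        rw [← commutatorElement_inv]
        exact inv_mem (Subgroup.commutator_mem_commutator ⟨g, rfl⟩ (inv_mem ⟨c, rfl⟩))
      have hone : ⁅chiIota1 G g * p * (chiIota1 G g)⁻¹,
          ⁅(chiIota2 G c)⁻¹, chiIota1 G g⁆⁆ = 1 :=
        commutatorElement_eq_one_iff_commute.mpr
          ((chi_commute_D_L G _ hd _ hnL).symm)
      have key : chiIota1 G g * ⁅p, chiIota2 G c⁆ * (chiIota1 G g)⁻¹ =
          ⁅chiIota1 G g * p * (chiIota1 G g)⁻¹, chiIota2 G c⁆ *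
            (chiIota2 G c * ⁅chiIota1 G g * p * (chiIota1 G g)⁻¹,
              ⁅(chiIota2 G c)⁻¹, chiIota1 G g⁆⁆ * (chiIota2 G c)⁻¹) := by
        simp only [commutatorElement_def]; group
      rw [key, hone]
      have htriv : ⁅chiIota1 G g * p * (chiIota1 G g)⁻¹, chiIota2 G c⁆ *
          (chiIota2 G c * 1 * (chiIota2 G c)⁻¹) =
          ⁅chiIota1 G g * p * (chiIota1 G g)⁻¹, chiIota2 G c⁆ := by group
      rw [htriv]
      exact Subgroup.commutator_mem_commutator hnL ⟨c, rfl⟩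
    | one =>
      have : chiIota1 G g * 1 * (chiIota1 G g)⁻¹ = 1 := by group
      rw [this]; exact one_mem _
    | mul x y hx hy ihx ihy =>
      have : chiIota1 G g * (x * y) * (chiIota1 G g)⁻¹ =
          (chiIota1 G g * x * (chiIota1 G g)⁻¹) * (chiIota1 G g * y * (chiIota1 G g)⁻¹) := by
        group
      rw [this]; exact mul_mem ihx ihy
    | inv x hx ih =>
      have : chiIota1 G g * x⁻¹ * (chiIota1 G g)⁻¹ =
          (chiIota1 G g * x * (chiIota1 G g)⁻¹)⁻¹ := by group
      rw [this]; exact inv_mem ih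
  · intro g n hn
    have hn' : n ∈ ⁅chiL G, chiG2 G⁆ := hn
    rw [Subgroup.commutator_def] at hn'
    clear hn
    induction hn' using Subgroup.closure_induction with
    | mem x hx =>
      obtain ⟨p, hp, q, hq, rfl⟩ := hx
      obtain ⟨c, rfl⟩ := hq
      have key : chiIota2 G g * ⁅p, chiIota2 G c⁆ * (chiIota2 G g)⁻¹ =
          ⁅chiIota2 G g * p * (chiIota2 G g)⁻¹, chiIota2 G (g * c * g⁻¹)⁆ := by
        simp only [map_mul, map_inv, commutatorElement_def]; group
      rw [key]
      exact Subgroup.commutator_mem_commutator (chi_conjL_j G g p hp) ⟨g * c * g⁻¹, rfl⟩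
    | one =>
      have : chiIota2 G g * 1 * (chiIota2 G g)⁻¹ = 1 := by group
      rw [this]; exact one_mem _
    | mul x y hx hy ihx ihy =>
      have : chiIota2 G g * (x * y) * (chiIota2 G g)⁻¹ =
          (chiIota2 G g * x * (chiIota2 G g)⁻¹) * (chiIota2 G g * y * (chiIota2 G g)⁻¹) := by
        group
      rw [this]; exact mul_mem ihx ihy
    | inv x hx ih =>
      have : chiIota2 G g * x⁻¹ * (chiIota2 G g)⁻¹ =
          (chiIota2 G g * x * (chiIota2 G g)⁻¹)⁻¹ := by group
      rw [this]; exact inv_mem ih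

end ChiNormal2
section ChiBeta

variable (G : Type*) [Group G]

/-- The projection `χ(G) → G × G`. -/
def chiBeta : Chi G →* G × G :=
  QuotientGroup.lift (chiRel G)
    (Monoid.Coprod.lift (MonoidHom.inl G G) (MonoidHom.inr G G))
    (Subgroup.normalClosure_le_normal (by
      rintro x ⟨g, rfl⟩
      rw [SetLike.mem_coe, MonoidHom.mem_ker]
      simp only [map_mul, map_inv, Monoid.Coprod.lift_apply_inl, Monoid.Coprod.lift_apply_inr,
        MonoidHom.inl_apply, MonoidHom.inr_apply, Prod.mk_mul_mk, Prod.inv_mk, Prod.mk_eq_one,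
        mul_one, one_mul]
      constructor <;> group))

lemma chiBeta_i1 (g : G) : chiBeta G (chiIota1 G g) = (g, 1) := rfl

lemma chiBeta_i2 (g : G) : chiBeta G (chiIota2 G g) = (1, g) := rfl

lemma chi_ker_beta_le_D : ∀ x : Chi G, chiBeta G x = 1 → x ∈ chiD G := by
  haveI := chiD_normal G
  have hcomm : ∀ m n : G, Commute ((QuotientGroup.mk' (chiD G)) (chiIota1 G m))
      ((QuotientGroup.mk' (chiD G)) (chiIota2 G n)) := by
    intro m n
    rw [← commutatorElement_eq_one_iff_commute, ← map_commutatorElement]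
    exact (QuotientGroup.eq_one_iff _).mpr
      (Subgroup.commutator_mem_commutator ⟨m, rfl⟩ ⟨n, rfl⟩)
  let ψ : G × G →* Chi G ⧸ chiD G :=
    MonoidHom.noncommCoprod ((QuotientGroup.mk' (chiD G)).comp (chiIota1 G))
      ((QuotientGroup.mk' (chiD G)).comp (chiIota2 G)) hcomm
  have hretr : ψ.comp (chiBeta G) = QuotientGroup.mk' (chiD G) := by
    apply QuotientGroup.monoidHom_ext (chiRel G)
    apply Monoid.Coprod.hom_ext
    · ext z
      show ψ (chiBeta G (chiIota1 G z)) = QuotientGroup.mk' (chiD G) (chiIota1 G z)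
      rw [chiBeta_i1]
      show (QuotientGroup.mk' (chiD G)) (chiIota1 G z) *
        (QuotientGroup.mk' (chiD G)) (chiIota2 G 1) = _
      simp
    · ext z
      show ψ (chiBeta G (chiIota2 G z)) = QuotientGroup.mk' (chiD G) (chiIota2 G z)
      rw [chiBeta_i2]
      show (QuotientGroup.mk' (chiD G)) (chiIota1 G 1) *
        (QuotientGroup.mk' (chiD G)) (chiIota2 G z) = _
      simp
  intro x hx
  have h1 : ψ (chiBeta G x) = QuotientGroup.mk' (chiD G) x := DFunLike.congr_fun hretr x
  rw [hx, map_one] at h1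
  have h2 : (QuotientGroup.mk' (chiD G)) x = 1 := h1.symm
  rwa [QuotientGroup.mk'_apply, QuotientGroup.eq_one_iff] at h2

lemma chi_w_mem_D (k a b : G) :
    ⁅⁅(chiIota1 G k)⁻¹ * chiIota2 G k, chiIota1 G a⁆, chiIota2 G b⁆ ∈ chiD G := by
  apply chi_ker_beta_le_D
  rw [map_commutatorElement, map_commutatorElement, map_mul, map_inv,
    chiBeta_i1, chiBeta_i2, chiBeta_i1, chiBeta_i2]
  simp only [commutatorElement_def, Prod.inv_mk, Prod.mk_mul_mk, Prod.mk_eq_one,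
    mul_one, one_mul]
  constructor <;> group

end ChiBeta
theorem commutator_additive_mod_L12 (G : Type*) [Group G] (g h a b : G) :
    ⁅⁅((chiIota1 G g)⁻¹ * chiIota2 G g) * ((chiIota1 G h)⁻¹ * chiIota2 G h),
        chiIota1 G a⁆, chiIota2 G b⁆ *
      (⁅⁅(chiIota1 G g)⁻¹ * chiIota2 G g, chiIota1 G a⁆, chiIota2 G b⁆ *
        ⁅⁅(chiIota1 G h)⁻¹ * chiIota2 G h, chiIota1 G a⁆, chiIota2 G b⁆)⁻¹ ∈
      chiL12 G := by
  haveI hLn := chiL_normal G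
  haveI hL1n := chiL1_normal G
  haveI hL2n := chiL2_normal G
  haveI hL12n : (chiL12 G).Normal :=
    show (⁅chiL1 G, chiL2 G⁆).Normal from Subgroup.commutator_normal _ _
  set u : Chi G := (chiIota1 G g)⁻¹ * chiIota2 G g with hu
  set v : Chi G := (chiIota1 G h)⁻¹ * chiIota2 G h with hv
  have hu_mem : u ∈ chiL G := Subgroup.subset_closure ⟨g, rfl⟩
  have hv_mem : v ∈ chiL G := Subgroup.subset_closure ⟨h, rfl⟩
  have hvx_mem : ⁅v, chiIota1 G a⁆ ∈ chiL1 G :=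
    Subgroup.commutator_mem_commutator hv_mem ⟨a, rfl⟩
  have hux_mem : ⁅u, chiIota1 G a⁆ ∈ chiL G := by
    have hrw : ⁅u, chiIota1 G a⁆ =
        u * (chiIota1 G a * u⁻¹ * (chiIota1 G a)⁻¹) := by
      simp only [commutatorElement_def]; group
    rw [hrw]
    exact mul_mem hu_mem (hLn.conj_mem _ (inv_mem hu_mem) _)
  have hw_mem : ⁅⁅u, chiIota1 G a⁆, chiIota2 G b⁆ ∈ chiL2 G :=
    Subgroup.commutator_mem_commutator hux_mem ⟨b, rfl⟩
  rw [final_identity u v (chiIota1 G a) (chiIota2 G b)]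
  refine mul_mem (mul_mem ?_ ?_) ?_
  · -- ⁅u⁅v,x⁆u⁻¹, w⁆ ∈ ⁅L₁, L₂⁆
    exact Subgroup.commutator_mem_commutator (hL1n.conj_mem _ hvx_mem u) hw_mem
  · -- middle term is trivial since w' ∈ D commutes with u ∈ L
    have hw'D : ⁅⁅v, chiIota1 G a⁆, chiIota2 G b⁆ ∈ chiD G := chi_w_mem_D G h a b
    have hone : ⁅u, ⁅⁅v, chiIota1 G a⁆, chiIota2 G b⁆⁆ = 1 :=
      commutatorElement_eq_one_iff_commute.mpr
        ((chi_commute_D_L G _ hw'D _ hu_mem).symm)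
    rw [hone]
    have htriv : ⁅⁅u, chiIota1 G a⁆, chiIota2 G b⁆ * 1 *
        ⁅⁅u, chiIota1 G a⁆, chiIota2 G b⁆⁻¹ = 1 := by group
    rw [htriv]
    exact one_mem _
  · -- conjugate of conjugate of z ∈ ⁅L₁, L₂⁆
    apply hL12n.conj_mem
    apply hL12n.conj_mem
    apply Subgroup.commutator_mem_commutator hvx_mem
    rw [← commutatorElement_inv]
    exact inv_mem (Subgroup.commutator_mem_commutator (inv_mem hu_mem)
      (inv_mem ⟨b, rfl⟩))
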